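/- Let Σ be a compact manifold of dimension m−1 with a fixed Riemannian metric h, and let g_j, g₀ be continuous Riemannian metrics on Σ with g₀ ≤ g_j. Suppose ∫_Σ |g_j − g₀|_h^{(m−1)/2} dA_h → 0 as j → ∞, where |·|_h is the pointwise tensor norm with respect to h, and suppose the eigenvalues of g_j with respect to h are uniformly bounded. Then Area(Σ, g_j) → Area(Σ, g₀). -/

import Mathlib

open MeasureTheory Filter Matrix

/-- The pointwise Frobenius norm of a matrix (the tensor norm with respect to the
background metric `h`, computed in an `h`-orthonormal frame). -/
noncomputable def frobNorm {k : ℕ} (A : Matrix (Fin k) (Fin k) ℝ) : ℝ :=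
  Real.sqrt (∑ i, ∑ l, (A i l) ^ 2)

lemma frobNorm_nonneg {k : ℕ} (A : Matrix (Fin k) (Fin k) ℝ) : 0 ≤ frobNorm A :=
  Real.sqrt_nonneg _

lemma abs_entry_le_frobNorm {k : ℕ} (A : Matrix (Fin k) (Fin k) ℝ) (i l : Fin k) :
    |A i l| ≤ frobNorm A := by
  rw [frobNorm, ← Real.sqrt_sq_eq_abs]
  apply Real.sqrt_le_sqrt
  calc (A i l) ^ 2 ≤ ∑ l', (A i l') ^ 2 :=
        Finset.single_le_sum (f := fun l' => (A i l') ^ 2)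
          (fun _ _ => sq_nonneg _) (Finset.mem_univ l)
    _ ≤ ∑ i', ∑ l', (A i' l') ^ 2 :=
        Finset.single_le_sum (f := fun i' => ∑ l', (A i' l') ^ 2)
          (fun _ _ => Finset.sum_nonneg fun _ _ => sq_nonneg _) (Finset.mem_univ i)

lemma frobNorm_le {k : ℕ} (A : Matrix (Fin k) (Fin k) ℝ) (M : ℝ) (hM : 0 ≤ M)
    (h : ∀ i l, |A i l| ≤ M) : frobNorm A ≤ k * M := by
  have hsum : ∑ i, ∑ l, (A i l) ^ 2 ≤ ((k : ℝ) * M) ^ 2 := by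
    calc ∑ i, ∑ l, (A i l) ^ 2 ≤ ∑ _i : Fin k, ∑ _l : Fin k, M ^ 2 := by
          refine Finset.sum_le_sum fun i _ => Finset.sum_le_sum fun l _ => ?_
          rw [← sq_abs]
          exact pow_le_pow_left₀ (abs_nonneg _) (h i l) 2
      _ = ((k : ℝ) * M) ^ 2 := by
          simp [Finset.sum_const, Finset.card_univ]
          ring
  calc frobNorm A ≤ Real.sqrt (((k : ℝ) * M) ^ 2) := Real.sqrt_le_sqrt hsum
    _ = (k : ℝ) * M := Real.sqrt_sq (by positivity)

lemma abs_prod_le {ι : Type*} (s : Finset ι) (a : ι → ℝ) (M : ℝ)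
    (ha : ∀ i, |a i| ≤ M) : |∏ i ∈ s, a i| ≤ M ^ s.card := by
  rw [Finset.abs_prod]
  calc ∏ i ∈ s, |a i| ≤ ∏ _i ∈ s, M :=
        Finset.prod_le_prod (fun _ _ => abs_nonneg _) (fun i _ => ha i)
    _ = M ^ s.card := Finset.prod_const M

lemma abs_prod_sub_prod_le {ι : Type*} [DecidableEq ι] (s : Finset ι) (a b : ι → ℝ) (M : ℝ)
    (hM : 1 ≤ M) (ha : ∀ i, |a i| ≤ M) (hb : ∀ i, |b i| ≤ M) :
    |∏ i ∈ s, a i - ∏ i ∈ s, b i| ≤ M ^ s.card * ∑ i ∈ s, |a i - b i| := by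
  have hM0 : (0 : ℝ) ≤ M := le_trans zero_le_one hM
  induction s using Finset.induction_on with
  | empty => simp
  | @insert j s hj ih =>
    rw [Finset.prod_insert hj, Finset.prod_insert hj, Finset.sum_insert hj,
      Finset.card_insert_of_notMem hj]
    have key : a j * ∏ i ∈ s, a i - b j * ∏ i ∈ s, b i
        = (a j - b j) * ∏ i ∈ s, a i + b j * (∏ i ∈ s, a i - ∏ i ∈ s, b i) := by ring
    have h1 : |(a j - b j) * ∏ i ∈ s, a i| ≤ |a j - b j| * M ^ s.card := by
      rw [abs_mul]
      exact mul_le_mul_of_nonneg_left (abs_prod_le s a M ha) (abs_nonneg _)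
    have h2 : |b j * (∏ i ∈ s, a i - ∏ i ∈ s, b i)|
        ≤ M * (M ^ s.card * ∑ i ∈ s, |a i - b i|) := by
      rw [abs_mul]
      exact mul_le_mul (hb j) ih (abs_nonneg _) hM0
    have hpow : M ^ s.card ≤ M ^ (s.card + 1) := pow_le_pow_right₀ hM (Nat.le_succ _)
    calc |a j * ∏ i ∈ s, a i - b j * ∏ i ∈ s, b i|
        ≤ |(a j - b j) * ∏ i ∈ s, a i| + |b j * (∏ i ∈ s, a i - ∏ i ∈ s, b i)| := by
          rw [key]; exact abs_add_le _ _
      _ ≤ |a j - b j| * M ^ s.card + M * (M ^ s.card * ∑ i ∈ s, |a i - b i|) :=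
          add_le_add h1 h2
      _ ≤ |a j - b j| * M ^ (s.card + 1) + M ^ (s.card + 1) * ∑ i ∈ s, |a i - b i| := by
          refine add_le_add (mul_le_mul_of_nonneg_left hpow (abs_nonneg _)) ?_
          rw [← mul_assoc, ← pow_succ']
      _ = M ^ (s.card + 1) * (|a j - b j| + ∑ i ∈ s, |a i - b i|) := by ring

lemma abs_sign_smul {n : Type*} [DecidableEq n] [Fintype n] (σ : Equiv.Perm n) (x : ℝ) :
    |((Equiv.Perm.sign σ : ℤ) : ℝ) * x| = |x| := by
  rcases Int.units_eq_one_or (Equiv.Perm.sign σ) with h | h <;> simp [h]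

lemma abs_det_le {k : ℕ} (A : Matrix (Fin k) (Fin k) ℝ) (M : ℝ) (hM : 1 ≤ M)
    (h : ∀ i l, |A i l| ≤ M) : |A.det| ≤ (k.factorial : ℝ) * M ^ k := by
  rw [Matrix.det_apply']
  calc |∑ σ : Equiv.Perm (Fin k), ((Equiv.Perm.sign σ : ℤ) : ℝ) * ∏ i, A (σ i) i|
      ≤ ∑ σ : Equiv.Perm (Fin k), |((Equiv.Perm.sign σ : ℤ) : ℝ) * ∏ i, A (σ i) i| :=
        Finset.abs_sum_le_sum_abs _ _
    _ ≤ ∑ _σ : Equiv.Perm (Fin k), M ^ k := by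
        refine Finset.sum_le_sum fun σ _ => ?_
        rw [abs_sign_smul]
        have := abs_prod_le Finset.univ (fun i => A (σ i) i) M (fun i => h (σ i) i)
        simpa using this
    _ = (k.factorial : ℝ) * M ^ k := by
        rw [Finset.sum_const, Finset.card_univ, Fintype.card_perm, Fintype.card_fin,
          nsmul_eq_mul]

lemma abs_det_sub_det_le {k : ℕ} (A B : Matrix (Fin k) (Fin k) ℝ) (M : ℝ) (hM : 1 ≤ M)
    (hA : ∀ i l, |A i l| ≤ M) (hB : ∀ i l, |B i l| ≤ M) :
    |A.det - B.det| ≤ (k.factorial : ℝ) * k * M ^ k * frobNorm (A - B) := by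
  rw [Matrix.det_apply', Matrix.det_apply', ← Finset.sum_sub_distrib]
  have hstep : ∀ σ : Equiv.Perm (Fin k),
      |((Equiv.Perm.sign σ : ℤ) : ℝ) * ∏ i, A (σ i) i
        - ((Equiv.Perm.sign σ : ℤ) : ℝ) * ∏ i, B (σ i) i|
      ≤ M ^ k * ((k : ℝ) * frobNorm (A - B)) := by
    intro σ
    rw [← mul_sub, abs_sign_smul]
    have h1 := abs_prod_sub_prod_le Finset.univ (fun i => A (σ i) i) (fun i => B (σ i) i) M hM
      (fun i => hA (σ i) i) (fun i => hB (σ i) i)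
    have h2 : ∑ i : Fin k, |A (σ i) i - B (σ i) i| ≤ (k : ℝ) * frobNorm (A - B) := by
      calc ∑ i : Fin k, |A (σ i) i - B (σ i) i| ≤ ∑ _i : Fin k, frobNorm (A - B) := by
            refine Finset.sum_le_sum fun i _ => ?_
            have := abs_entry_le_frobNorm (A - B) (σ i) i
            simpa [Matrix.sub_apply] using this
        _ = (k : ℝ) * frobNorm (A - B) := by
            rw [Finset.sum_const, Finset.card_univ, Fintype.card_fin, nsmul_eq_mul]
    calc |∏ i, A (σ i) i - ∏ i, B (σ i) i|
        ≤ M ^ (Finset.univ : Finset (Fin k)).card * ∑ i, |A (σ i) i - B (σ i) i| := h1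
      _ ≤ M ^ k * ((k : ℝ) * frobNorm (A - B)) := by
          rw [Finset.card_univ, Fintype.card_fin]
          exact mul_le_mul_of_nonneg_left h2 (by positivity)
  calc |∑ σ : Equiv.Perm (Fin k), (((Equiv.Perm.sign σ : ℤ) : ℝ) * ∏ i, A (σ i) i
        - ((Equiv.Perm.sign σ : ℤ) : ℝ) * ∏ i, B (σ i) i)|
      ≤ ∑ σ : Equiv.Perm (Fin k), |((Equiv.Perm.sign σ : ℤ) : ℝ) * ∏ i, A (σ i) i
        - ((Equiv.Perm.sign σ : ℤ) : ℝ) * ∏ i, B (σ i) i| := Finset.abs_sum_le_sum_abs _ _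
    _ ≤ ∑ _σ : Equiv.Perm (Fin k), M ^ k * ((k : ℝ) * frobNorm (A - B)) :=
        Finset.sum_le_sum fun σ _ => hstep σ
    _ = (k.factorial : ℝ) * k * M ^ k * frobNorm (A - B) := by
        rw [Finset.sum_const, Finset.card_univ, Fintype.card_perm, Fintype.card_fin,
          nsmul_eq_mul]
        ring

lemma sqrt_le_sqrt_add_sqrt_abs (a b : ℝ) : Real.sqrt a ≤ Real.sqrt b + Real.sqrt |a - b| := by
  rcases le_or_gt b 0 with hb | hb
  · rcases le_or_gt a 0 with ha | ha
    · rw [Real.sqrt_eq_zero'.mpr ha]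
      positivity
    · have h1 : a ≤ |a - b| := by
        rw [abs_of_nonneg (by linarith)]; linarith
      calc Real.sqrt a ≤ Real.sqrt |a - b| := Real.sqrt_le_sqrt h1
        _ ≤ Real.sqrt b + Real.sqrt |a - b| := le_add_of_nonneg_left (Real.sqrt_nonneg _)
  · have key : a ≤ (Real.sqrt b + Real.sqrt |a - b|) ^ 2 := by
      have e : (Real.sqrt b + Real.sqrt |a - b|) ^ 2
          = b + |a - b| + 2 * Real.sqrt b * Real.sqrt |a - b| := by
        have h1 : Real.sqrt b ^ 2 = b := Real.sq_sqrt hb.le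
        have h2 : Real.sqrt |a - b| ^ 2 = |a - b| := Real.sq_sqrt (abs_nonneg _)
        ring_nf
        nlinarith [h1, h2]
      have h3 : a - b ≤ |a - b| := le_abs_self _
      have h4 : 0 ≤ 2 * Real.sqrt b * Real.sqrt |a - b| := by positivity
      linarith [e]
    calc Real.sqrt a ≤ Real.sqrt ((Real.sqrt b + Real.sqrt |a - b|) ^ 2) :=
          Real.sqrt_le_sqrt key
      _ = Real.sqrt b + Real.sqrt |a - b| := Real.sqrt_sq (by positivity)

lemma abs_sqrt_sub_sqrt_le (a b : ℝ) : |Real.sqrt a - Real.sqrt b| ≤ Real.sqrt |a - b| := by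
  rw [abs_sub_le_iff]
  constructor
  · linarith [sqrt_le_sqrt_add_sqrt_abs a b]
  · have := sqrt_le_sqrt_add_sqrt_abs b a
    rw [abs_sub_comm] at this
    linarith

lemma measurable_det_of_entries {X : Type*} [MeasurableSpace X] {k : ℕ}
    (g : X → Matrix (Fin k) (Fin k) ℝ) (h : ∀ i l, Measurable fun x => g x i l) :
    Measurable fun x => (g x).det := by
  simp_rw [Matrix.det_apply']
  exact Finset.measurable_sum _ fun σ _ =>
    (Finset.measurable_prod _ fun i _ => h (σ i) i).const_mul _


lemma integrable_of_abs_bound {X : Type*} [MeasurableSpace X] (μ : MeasureTheory.Measure X)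
    [MeasureTheory.IsFiniteMeasure μ] (f : X → ℝ) (C : ℝ) (hf : Measurable f)
    (hC : ∀ x, |f x| ≤ C) : MeasureTheory.Integrable f μ :=
  (MeasureTheory.integrable_const C).mono' hf.aestronglyMeasurable
    (Filter.Eventually.of_forall fun x => by rw [Real.norm_eq_abs]; exact hC x)

/-- Convergence of areas (Lemmas 2.7 and 4.3 of Allen–Sormani): on a compact
`(m−1)`-dimensional manifold `Σ` with background metric `h` (represented here by its
volume measure `μ`, with metrics expressed in an `h`-orthonormal frame as matrix fields),
if `g₀ ≤ g_j`, the eigenvalues of `g_j` are uniformly bounded, and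
`∫ |g_j − g₀|_h^{(m−1)/2} dA_h → 0`, then `Area(Σ, g_j) → Area(Σ, g₀)`. -/
theorem area_convergence_of_Lp_metric_convergence
    {X : Type*} [TopologicalSpace X] [CompactSpace X]
    [MeasurableSpace X] [BorelSpace X]
    (μ : Measure X) [IsFiniteMeasure μ]
    (m : ℕ) (hm : 2 ≤ m)
    (gj : ℕ → X → Matrix (Fin (m-1)) (Fin (m-1)) ℝ)
    (g₀ : X → Matrix (Fin (m-1)) (Fin (m-1)) ℝ)
    (hmeasj : ∀ n i l, Measurable fun x => gj n x i l)
    (hmeas0 : ∀ i l, Measurable fun x => g₀ x i l)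
    (hsymmj : ∀ n x, (gj n x).IsSymm) (hsymm0 : ∀ x, (g₀ x).IsSymm)
    (hposdef0 : ∀ (x : X) (v : Fin (m-1) → ℝ), 0 ≤ v ⬝ᵥ (g₀ x).mulVec v)
    (hle : ∀ (n : ℕ) (x : X) (v : Fin (m-1) → ℝ),
      v ⬝ᵥ (g₀ x).mulVec v ≤ v ⬝ᵥ (gj n x).mulVec v)
    (hbound : ∃ Λ : ℝ, ∀ n x, frobNorm (gj n x) ≤ Λ)
    (hLp : Tendsto
      (fun n => ∫ x, frobNorm (gj n x - g₀ x) ^ (((m:ℝ) - 1)/2) ∂μ) atTop (nhds 0)) :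
    Tendsto (fun n => ∫ x, Real.sqrt (gj n x).det ∂μ) atTop
      (nhds (∫ x, Real.sqrt (g₀ x).det ∂μ)) := by
  classical
  obtain ⟨Λ, hΛ⟩ := hbound
  have hk1 : 1 ≤ m - 1 := by omega
  set p : ℝ := ((m:ℝ) - 1)/2 with hp
  have hm2 : (2:ℝ) ≤ (m:ℝ) := by exact_mod_cast hm
  have hp0 : 0 < p := by rw [hp]; linarith
  set M : ℝ := max Λ 1 with hMdef
  have hM1 : (1 : ℝ) ≤ M := le_max_right _ _
  have hM0 : (0 : ℝ) ≤ M := by linarith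
  -- entry bounds for gj
  have hej : ∀ n x i l, |gj n x i l| ≤ M := fun n x i l =>
    le_trans (abs_entry_le_frobNorm _ i l) (le_trans (hΛ n x) (le_max_left _ _))
  -- quadratic form computations
  have q1 : ∀ (A : Matrix (Fin (m-1)) (Fin (m-1)) ℝ) (i : Fin (m-1)),
      (Pi.single i (1:ℝ)) ⬝ᵥ A.mulVec (Pi.single i 1) = A i i := by
    intro A i
    simp [Matrix.mulVec_single, single_dotProduct]
  have qform : ∀ (A : Matrix (Fin (m-1)) (Fin (m-1)) ℝ) (i l : Fin (m-1)) (a b : ℝ),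
      (Pi.single i a + Pi.single l b) ⬝ᵥ A.mulVec (Pi.single i a + Pi.single l b)
        = a * A i i * a + a * A i l * b + b * A l i * a + b * A l l * b := by
    intro A i l a b
    simp only [Matrix.mulVec_add, Matrix.mulVec_single, dotProduct_add, add_dotProduct,
      single_dotProduct, Pi.smul_apply, Matrix.col_apply, op_smul_eq_mul]
    ring
  have hdiag0 : ∀ x i, 0 ≤ g₀ x i i := by
    intro x i
    have := hposdef0 x (Pi.single i 1)
    rwa [q1] at this
  have hdiagM : ∀ x i, g₀ x i i ≤ M := by
    intro x i
    have h1 := hle 0 x (Pi.single i 1)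
    rw [q1, q1] at h1
    exact le_trans h1 (le_trans (le_abs_self _) (hej 0 x i i))
  have he0 : ∀ x i l, |g₀ x i l| ≤ M := by
    intro x i l
    have hsym := (hsymm0 x).apply i l
    have hplus := hposdef0 x (Pi.single i 1 + Pi.single l 1)
    have hminus := hposdef0 x (Pi.single i 1 + Pi.single l (-1))
    rw [qform] at hplus hminus
    have d1 := hdiag0 x i
    have d2 := hdiag0 x l
    have d3 := hdiagM x i
    have d4 := hdiagM x l
    rw [abs_le]
    constructor <;> nlinarith [hsym]
  -- constants
  set K₁ : ℝ := ((m-1).factorial : ℝ) * ((m-1 : ℕ) : ℝ) * M ^ (m-1) with hK₁def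
  have hK₁0 : 0 ≤ K₁ := by positivity
  set B : ℝ := 2 * ((m-1 : ℕ) : ℝ) * M with hBdef
  have hk1' : (1:ℝ) ≤ ((m-1 : ℕ) : ℝ) := by exact_mod_cast hk1
  have hB0 : 0 < B := by nlinarith
  have hfB : ∀ n x, frobNorm (gj n x - g₀ x) ≤ B := by
    intro n x
    have h := frobNorm_le (gj n x - g₀ x) (2*M) (by linarith) (fun i l => by
      rw [Matrix.sub_apply]
      calc |gj n x i l - g₀ x i l| ≤ |gj n x i l| + |g₀ x i l| := abs_sub _ _
        _ ≤ 2*M := by linarith [hej n x i l, he0 x i l])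
    calc frobNorm (gj n x - g₀ x) ≤ ((m-1 : ℕ) : ℝ) * (2*M) := h
      _ = B := by rw [hBdef]; ring
  -- pointwise estimate 1
  have hptF : ∀ n x, |Real.sqrt (gj n x).det - Real.sqrt (g₀ x).det|
      ≤ Real.sqrt K₁ * Real.sqrt (frobNorm (gj n x - g₀ x)) := by
    intro n x
    calc |Real.sqrt (gj n x).det - Real.sqrt (g₀ x).det|
        ≤ Real.sqrt |(gj n x).det - (g₀ x).det| := abs_sqrt_sub_sqrt_le _ _
      _ ≤ Real.sqrt (K₁ * frobNorm (gj n x - g₀ x)) := Real.sqrt_le_sqrt (by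
          rw [hK₁def]
          exact abs_det_sub_det_le _ _ M hM1 (hej n x) (he0 x))
      _ = Real.sqrt K₁ * Real.sqrt (frobNorm (gj n x - g₀ x)) := Real.sqrt_mul hK₁0 _
  -- pointwise estimate 2
  have hpt2 : ∀ (δ : ℝ), 0 < δ → ∀ n x,
      Real.sqrt (frobNorm (gj n x - g₀ x)) ≤ Real.sqrt δ
        + Real.sqrt B * (frobNorm (gj n x - g₀ x) ^ p / δ ^ p) := by
    intro δ hδ n x
    have ht0 : 0 ≤ frobNorm (gj n x - g₀ x) := frobNorm_nonneg _
    have htB := hfB n x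
    rcases le_or_gt (frobNorm (gj n x - g₀ x)) δ with h | h
    · have h1 : Real.sqrt (frobNorm (gj n x - g₀ x)) ≤ Real.sqrt δ := Real.sqrt_le_sqrt h
      have h2 : 0 ≤ Real.sqrt B * (frobNorm (gj n x - g₀ x) ^ p / δ ^ p) := by
        have := Real.rpow_nonneg ht0 p
        positivity
      linarith
    · have h1 : Real.sqrt (frobNorm (gj n x - g₀ x)) ≤ Real.sqrt B := Real.sqrt_le_sqrt htB
      have h2 : 1 ≤ frobNorm (gj n x - g₀ x) ^ p / δ ^ p := by
        rw [← Real.div_rpow ht0 hδ.le]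
        exact Real.one_le_rpow ((one_le_div hδ).mpr h.le) hp0.le
      have h3 := mul_le_mul_of_nonneg_left h2 (Real.sqrt_nonneg B)
      have h4 := Real.sqrt_nonneg δ
      linarith
  -- measurability
  have hfmeas : ∀ n, Measurable fun x => frobNorm (gj n x - g₀ x) := by
    intro n
    simp only [frobNorm, Matrix.sub_apply]
    apply Measurable.sqrt
    refine Finset.measurable_sum _ fun i _ => Finset.measurable_sum _ fun l _ => ?_
    exact ((hmeasj n i l).sub (hmeas0 i l)).pow_const 2
  have hfpmeas : ∀ n, Measurable fun x => frobNorm (gj n x - g₀ x) ^ p := fun n =>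
    (Real.continuous_rpow_const hp0.le).measurable.comp (hfmeas n)
  have hFmeas : ∀ n, Measurable fun x => Real.sqrt (gj n x).det := fun n =>
    (measurable_det_of_entries _ (hmeasj n)).sqrt
  have hF0meas : Measurable fun x => Real.sqrt (g₀ x).det :=
    (measurable_det_of_entries _ hmeas0).sqrt
  -- integrability
  set D : ℝ := Real.sqrt (((m-1).factorial : ℝ) * M ^ (m-1)) with hDdef
  have hFbd : ∀ (A : Matrix (Fin (m-1)) (Fin (m-1)) ℝ), (∀ i l, |A i l| ≤ M) →
      |Real.sqrt A.det| ≤ D := by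
    intro A hA
    rw [abs_of_nonneg (Real.sqrt_nonneg _), hDdef]
    exact Real.sqrt_le_sqrt (le_trans (le_abs_self _) (abs_det_le A M hM1 hA))
  have hFint : ∀ n, Integrable (fun x => Real.sqrt (gj n x).det) μ := fun n =>
    integrable_of_abs_bound μ _ D (hFmeas n) (fun x => hFbd _ (hej n x))
  have hF0int : Integrable (fun x => Real.sqrt (g₀ x).det) μ :=
    integrable_of_abs_bound μ _ D hF0meas (fun x => hFbd _ (he0 x))
  have hfpint : ∀ n, Integrable (fun x => frobNorm (gj n x - g₀ x) ^ p) μ := by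
    intro n
    refine integrable_of_abs_bound μ _ (B ^ p) (hfpmeas n) (fun x => ?_)
    rw [abs_of_nonneg (Real.rpow_nonneg (frobNorm_nonneg _) p)]
    exact Real.rpow_le_rpow (frobNorm_nonneg _) (hfB n x) hp0.le
  have hIn0 : ∀ n, 0 ≤ ∫ x, frobNorm (gj n x - g₀ x) ^ p ∂μ := fun n =>
    integral_nonneg fun x => Real.rpow_nonneg (frobNorm_nonneg _) p
  -- key integral estimate
  have key : ∀ (δ : ℝ), 0 < δ → ∀ n,
      dist (∫ x, Real.sqrt (gj n x).det ∂μ) (∫ x, Real.sqrt (g₀ x).det ∂μ)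
        ≤ (Real.sqrt K₁ * (μ Set.univ).toReal) * Real.sqrt δ
          + (Real.sqrt K₁ * Real.sqrt B) / δ ^ p * (∫ x, frobNorm (gj n x - g₀ x) ^ p ∂μ) := by
    intro δ hδ n
    rw [Real.dist_eq, ← integral_sub (hFint n) hF0int]
    have hptall : ∀ x, |Real.sqrt (gj n x).det - Real.sqrt (g₀ x).det|
        ≤ Real.sqrt K₁ * Real.sqrt δ
          + (Real.sqrt K₁ * Real.sqrt B) / δ ^ p * (frobNorm (gj n x - g₀ x) ^ p) := by
      intro x
      have h1 := hptF n x
      have h2 := hpt2 δ hδ n x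
      have h3 : Real.sqrt K₁ * Real.sqrt (frobNorm (gj n x - g₀ x))
          ≤ Real.sqrt K₁ * (Real.sqrt δ
            + Real.sqrt B * (frobNorm (gj n x - g₀ x) ^ p / δ ^ p)) :=
        mul_le_mul_of_nonneg_left h2 (Real.sqrt_nonneg _)
      have he : Real.sqrt K₁ * (Real.sqrt δ
            + Real.sqrt B * (frobNorm (gj n x - g₀ x) ^ p / δ ^ p))
          = Real.sqrt K₁ * Real.sqrt δ
            + (Real.sqrt K₁ * Real.sqrt B) / δ ^ p * (frobNorm (gj n x - g₀ x) ^ p) := by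
        ring
      linarith [he ▸ h3]
    calc |∫ x, (Real.sqrt (gj n x).det - Real.sqrt (g₀ x).det) ∂μ|
        ≤ ∫ x, |Real.sqrt (gj n x).det - Real.sqrt (g₀ x).det| ∂μ := by
          simpa [Real.norm_eq_abs] using
            norm_integral_le_integral_norm (μ := μ)
              (fun x => Real.sqrt (gj n x).det - Real.sqrt (g₀ x).det)
      _ ≤ ∫ x, (Real.sqrt K₁ * Real.sqrt δ
            + (Real.sqrt K₁ * Real.sqrt B) / δ ^ p * (frobNorm (gj n x - g₀ x) ^ p)) ∂μ := by
          refine integral_mono (((hFint n).sub hF0int).abs) ?_ hptall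
          exact (integrable_const _).add ((hfpint n).const_mul _)
      _ = (Real.sqrt K₁ * (μ Set.univ).toReal) * Real.sqrt δ
            + (Real.sqrt K₁ * Real.sqrt B) / δ ^ p
              * (∫ x, frobNorm (gj n x - g₀ x) ^ p ∂μ) := by
          rw [integral_add (integrable_const _) ((hfpint n).const_mul _), integral_const,
            integral_const_mul]
          simp [smul_eq_mul, Measure.real]
          ring
  -- conclusion
  rw [Metric.tendsto_atTop]
  intro ε hε
  set C₁ : ℝ := Real.sqrt K₁ * (μ Set.univ).toReal with hC₁def
  set C₂ : ℝ := Real.sqrt K₁ * Real.sqrt B with hC₂def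
  have hC₁0 : 0 ≤ C₁ := mul_nonneg (Real.sqrt_nonneg _) ENNReal.toReal_nonneg
  have hC₂0 : 0 ≤ C₂ := mul_nonneg (Real.sqrt_nonneg _) (Real.sqrt_nonneg _)
  set δ : ℝ := (ε / (2*(C₁+1)))^2 with hδdef
  have hδ : 0 < δ := by positivity
  have hδp : 0 < δ ^ p := Real.rpow_pos_of_pos hδ p
  have hsδ : Real.sqrt δ = ε/(2*(C₁+1)) := Real.sqrt_sq (by positivity)
  have h1 : C₁ * Real.sqrt δ ≤ ε/2 := by
    rw [hsδ]
    have ha : C₁ * (ε / (2*(C₁+1))) ≤ (C₁+1) * (ε/(2*(C₁+1))) :=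
      mul_le_mul_of_nonneg_right (by linarith) (by positivity)
    have hb : (C₁+1) * (ε/(2*(C₁+1))) = ε/2 := by
      field_simp
    linarith
  set ε₂ : ℝ := (ε/2) * δ ^ p / (C₂+1) with hε₂def
  have hε₂ : 0 < ε₂ := by positivity
  obtain ⟨N, hN⟩ := Metric.tendsto_atTop.mp hLp ε₂ hε₂
  refine ⟨N, fun n hn => ?_⟩
  have hIn : ∫ x, frobNorm (gj n x - g₀ x) ^ p ∂μ < ε₂ := by
    have := hN n hn
    rwa [Real.dist_eq, sub_zero, abs_of_nonneg (hIn0 n)] at this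
  have h2 : C₂ / δ ^ p * (∫ x, frobNorm (gj n x - g₀ x) ^ p ∂μ) < ε/2 := by
    have ha : C₂ / δ ^ p * (∫ x, frobNorm (gj n x - g₀ x) ^ p ∂μ) ≤ C₂ / δ ^ p * ε₂ :=
      mul_le_mul_of_nonneg_left hIn.le (by positivity)
    have hb : C₂ / δ ^ p * ε₂ = (ε/2) * (C₂/(C₂+1)) := by
      rw [hε₂def]
      field_simp
    have hc : (ε/2) * (C₂/(C₂+1)) < (ε/2) * 1 := by
      refine mul_lt_mul_of_pos_left ?_ (by linarith)
      exact (div_lt_one (by linarith)).mpr (by linarith)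
    linarith
  calc dist (∫ x, Real.sqrt (gj n x).det ∂μ) (∫ x, Real.sqrt (g₀ x).det ∂μ)
      ≤ C₁ * Real.sqrt δ
        + C₂ / δ ^ p * (∫ x, frobNorm (gj n x - g₀ x) ^ p ∂μ) := key δ hδ n
    _ < ε/2 + ε/2 := by linarith
    _ = ε := by ring
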